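/- Let R be a Noetherian local ring with maximal ideal m, and let M be a finitely generated R-module. If the length of M/m^{r+1}M equals r (a finite natural number), then m^r M = 0, and hence M = M/m^{r+1}M has length exactly r. -/

import Mathlib

/-- `moduleLengthEq R M r` : the `R`-module `M` has finite length exactly `r`,
expressed by the existence of a composition series from `⊥` to `⊤` of length `r`. -/
def moduleLengthEq (R M : Type*) [Ring R] [AddCommGroup M] [Module R M] (r : ℕ) : Prop :=
  ∃ s : CompositionSeries (Submodule R M), s.head = ⊥ ∧ s.last = ⊤ ∧ s.length = r

/-- Any strictly increasing chain of submodules lying below the top of a composition series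
starting at `⊥` has length at most the length of the composition series. -/
lemma ltSeries_length_le_aux {R Q : Type*} [Ring R] [AddCommGroup Q] [Module R Q] :
    ∀ (n : ℕ) (s : CompositionSeries (Submodule R Q)), s.length = n → s.head = ⊥ →
      ∀ p : LTSeries (Submodule R Q), p.last ≤ s.last → p.length ≤ n := by
  intro n
  induction n with
  | zero =>
    intro s hn hh p hp
    by_contra hk
    have hlast0 : Fin.last s.length = (0 : Fin (s.length + 1)) := by
      ext; simp [hn]
    have hsl : s.last = ⊥ := by
      rw [RelSeries.last, hlast0, ← hh]; rfl
    have hlt : p.head < p.last := by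
      apply p.strictMono
      show (0 : Fin (p.length + 1)) < Fin.last p.length
      rw [Fin.lt_def, Fin.val_zero, Fin.val_last]
      omega
    rw [hsl] at hp
    exact absurd (lt_of_lt_of_le hlt hp) (by simp)
  | succ n ih =>
    intro s hn hh p hple
    set k := p.length with hk
    rcases Nat.eq_zero_or_pos k with h0 | hkpos
    · omega
    set N := s.eraseLast.last with hNdef
    have hcov : N ⋖ s.last := s.isMaximal_eraseLast_last (by omega)
    have hEl : s.eraseLast.length = n := by
      simp only [RelSeries.eraseLast_length]; omega
    have hEh : s.eraseLast.head = ⊥ := by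
      rw [RelSeries.head_eraseLast]; exact hh
    have hple' : ∀ i : Fin (k + 1), p i ≤ s.last := fun i =>
      le_trans (p.strictMono.monotone (Fin.le_last i)) hple
    set pn : ℕ → Submodule R Q :=
      fun m => p ⟨min m k, Nat.lt_succ_of_le (min_le_right m k)⟩ with hpn
    have pnmono : Monotone pn := by
      intro a b hab
      exact p.strictMono.monotone (by simp only [Fin.mk_le_mk]; omega)
    have pnstrict : ∀ m, m < k → pn m < pn (m + 1) := by
      intro m hm
      apply p.strictMono
      simp only [Fin.mk_lt_mk]; omega
    set g : ℕ → Submodule R Q := fun m => pn m ⊓ N with hg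
    set t : ℕ → Submodule R Q := fun m => pn m ⊔ N with ht
    have gmono : Monotone g := fun a b hab => inf_le_inf_right _ (pnmono hab)
    have glek : ∀ m, g m ≤ N := fun m => inf_le_right
    have tmono : Monotone t := fun a b hab => sup_le_sup_right (pnmono hab) _
    have tN : ∀ m, N ≤ t m := fun m => le_sup_right
    have tle : ∀ m, t m ≤ s.last := fun m => sup_le (hple' _) hcov.le
    have claim1 : ∀ m, m < k → g m = g (m + 1) → t m = N ∧ t (m + 1) = s.last := by
      intro m hm hgm
      have hlt : pn m < pn (m + 1) := pnstrict m hm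
      have hts : t m ≠ t (m + 1) := by
        intro hts
        exact hlt.ne (eq_of_le_of_inf_le_of_sup_le hlt.le hgm.ge hts.ge)
      have htlt : t m < t (m + 1) := lt_of_le_of_ne (tmono (Nat.le_succ m)) hts
      have h1 : t m = N := by
        rcases hcov.eq_or_eq (tN m) (tle m) with h | h
        · exact h
        · exact absurd (lt_of_lt_of_le htlt (tle _)) (by rw [h]; exact lt_irrefl _)
      have h2 : t (m + 1) = s.last := by
        rcases hcov.eq_or_eq (tN (m + 1)) (tle (m + 1)) with h | h
        · rw [h1, h] at htlt; exact absurd htlt (lt_irrefl _)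
        · exact h
      exact ⟨h1, h2⟩
    have claim2 : ∀ m m', m < k → m' < k → g m = g (m + 1) → g m' = g (m' + 1) → m = m' := by
      have asym : ∀ m m', m < k → m' < k → g m = g (m + 1) → g m' = g (m' + 1) →
          m < m' → False := by
        intro m m' hm hm' h1 h2 hlt
        have e1 : t (m + 1) = s.last := (claim1 m hm h1).2
        have e2 : t m' = N := (claim1 m' hm' h2).1
        have : s.last ≤ N := by
          rw [← e1, ← e2]; exact tmono (by omega)
        exact absurd (lt_of_lt_of_le hcov.lt this) (lt_irrefl N)
      intro m m' hm hm' h1 h2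
      rcases lt_trichotomy m m' with h | h | h
      · exact absurd (asym m m' hm hm' h1 h2 h) id
      · exact h
      · exact absurd (asym m' m hm' hm h2 h1 h) id
    by_cases hbad : ∃ m, m < k ∧ g m = g (m + 1)
    · obtain ⟨i, hik, hbadi⟩ := hbad
      have sstep : ∀ m, m < k → m ≠ i → g m < g (m + 1) := fun m hm hne =>
        lt_of_le_of_ne (gmono (Nat.le_succ m)) (fun h => hne (claim2 m i hm hik h hbadi))
      set q : LTSeries (Submodule R Q) :=
        { length := k - 1
          toFun := fun j => g (if (j : ℕ) ≤ i then (j : ℕ) else (j : ℕ) + 1)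
          step := by
            intro j
            have hjlt : (j : ℕ) < k - 1 := j.isLt
            simp only [Fin.coe_castSucc, Fin.val_succ]
            split_ifs with h1 h2 h2
            · exact sstep _ (by omega) (by omega)
            · have hji : (j : ℕ) = i := by omega
              calc g (j : ℕ) = g ((j : ℕ) + 1) := by rw [hji]; exact hbadi
                _ < g ((j : ℕ) + 2) := sstep _ (by omega) (by omega)
            · exact absurd h2 (by omega)
            · exact sstep _ (by omega) (by omega) } with hq
      have hqlast : q.last ≤ s.eraseLast.last := by
        show g _ ≤ N
        exact glek _
      have := ih s.eraseLast hEl hEh q hqlast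
      have hql : q.length = k - 1 := rfl
      omega
    · push_neg at hbad
      have sstep : ∀ m, m < k → g m < g (m + 1) := fun m hm =>
        lt_of_le_of_ne (gmono (Nat.le_succ m)) (hbad m hm)
      set q : LTSeries (Submodule R Q) :=
        { length := k
          toFun := fun j => g (j : ℕ)
          step := by
            intro j
            simp only [Fin.coe_castSucc, Fin.val_succ]
            exact sstep _ j.isLt } with hq
      have hqlast : q.last ≤ s.eraseLast.last := by
        show g _ ≤ N
        exact glek _
      have := ih s.eraseLast hEl hEh q hqlast
      have hql : q.length = k := rfl
      omega

/-- If `R` is Noetherian local with maximal ideal `m` and `M` is a finitely generated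
`R`-module with `length (M / m^(r+1) M) = r`, then `m^r M = 0` and `length M = r`. -/
theorem stmt0 {R M : Type*} [CommRing R] [IsLocalRing R] [IsNoetherianRing R]
    [AddCommGroup M] [Module R M] [Module.Finite R M] (r : ℕ)
    (h : moduleLengthEq R
      (M ⧸ ((IsLocalRing.maximalIdeal R ^ (r + 1)) • (⊤ : Submodule R M))) r) :
    (IsLocalRing.maximalIdeal R ^ r) • (⊤ : Submodule R M) = ⊥ ∧ moduleLengthEq R M r := by
  set I := IsLocalRing.maximalIdeal R with hI
  set K := (I ^ (r + 1)) • (⊤ : Submodule R M) with hKdef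
  obtain ⟨s, hsh, hsl, hslen⟩ := h
  have key : ∃ j, j ≤ r ∧
      (I ^ j) • (⊤ : Submodule R (M ⧸ K)) = (I ^ (j + 1)) • (⊤ : Submodule R (M ⧸ K)) := by
    by_contra hc
    push_neg at hc
    have mono : ∀ j : ℕ, (I ^ (j + 1)) • (⊤ : Submodule R (M ⧸ K)) ≤ (I ^ j) • ⊤ :=
      fun j => Submodule.smul_mono (Ideal.pow_le_pow_right (Nat.le_succ j)) le_rfl
    have strict : ∀ j, j ≤ r →
        (I ^ (j + 1)) • (⊤ : Submodule R (M ⧸ K)) < (I ^ j) • ⊤ :=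
      fun j hj => lt_of_le_of_ne (mono j) (fun h => hc j hj h.symm)
    set q : LTSeries (Submodule R (M ⧸ K)) :=
      { length := r + 1
        toFun := fun i => (I ^ (r + 1 - (i : ℕ))) • ⊤
        step := by
          intro i
          have hilt : (i : ℕ) < r + 1 := i.isLt
          simp only [Fin.coe_castSucc, Fin.val_succ]
          have h1 : r + 1 - (i : ℕ) = (r - (i : ℕ)) + 1 := by omega
          have h2 : r + 1 - ((i : ℕ) + 1) = r - (i : ℕ) := by omega
          rw [h1, h2]
          exact strict _ (by omega) } with hq
    have hqlast : q.last ≤ s.last := by rw [hsl]; exact le_top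
    have := ltSeries_length_le_aux r s hslen hsh q hqlast
    have hql : q.length = r + 1 := rfl
    omega
  obtain ⟨j, hjr, hj⟩ := key
  have hjQ : (I ^ j) • (⊤ : Submodule R (M ⧸ K)) = ⊥ := by
    apply Submodule.eq_bot_of_le_smul_of_le_jacobson_bot I
    · exact IsNoetherian.noetherian _
    · rw [← Submodule.smul_assoc, smul_eq_mul, ← pow_succ']
      exact hj.le
    · exact IsLocalRing.maximalIdeal_le_jacobson ⊥
  have hrQ : (I ^ r) • (⊤ : Submodule R (M ⧸ K)) = ⊥ := by
    rw [eq_bot_iff, ← hjQ]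
    exact Submodule.smul_mono (Ideal.pow_le_pow_right hjr) le_rfl
  have hmap : Submodule.map K.mkQ ((I ^ r) • (⊤ : Submodule R M)) = ⊥ := by
    rw [Submodule.map_smul'', Submodule.map_top, Submodule.range_mkQ]
    exact hrQ
  have hsub : (I ^ r) • (⊤ : Submodule R M) ≤ K := by
    rwa [eq_bot_iff, Submodule.map_le_iff_le_comap, Submodule.comap_bot,
      Submodule.ker_mkQ] at hmap
  have hbot : (I ^ r) • (⊤ : Submodule R M) = ⊥ := by
    apply Submodule.eq_bot_of_le_smul_of_le_jacobson_bot I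
    · exact IsNoetherian.noetherian _
    · rw [hKdef] at hsub
      rwa [← Submodule.smul_assoc, smul_eq_mul, ← pow_succ']
    · exact IsLocalRing.maximalIdeal_le_jacobson ⊥
  refine ⟨hbot, ?_⟩
  have hKbot : K = ⊥ := by
    rw [eq_bot_iff, ← hbot]
    exact Submodule.smul_mono (Ideal.pow_le_pow_right (Nat.le_succ r)) le_rfl
  let e : (M ⧸ K) ≃ₗ[R] M := Submodule.quotEquivOfEqBot K hKbot
  let f : Submodule R (M ⧸ K) ≃o Submodule R M := Submodule.orderIsoMapComap e
  refine ⟨⟨s.length, fun i => f (s i), fun i => ?_⟩, ?_, ?_, ?_⟩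
  · exact (apply_covBy_apply_iff f).mpr (s.step i)
  · show f (s 0) = ⊥
    rw [show s 0 = s.head from rfl, hsh]
    exact f.map_bot
  · show f (s (Fin.last _)) = ⊤
    rw [show s (Fin.last _) = s.last from rfl, hsl]
    exact f.map_top
  · exact hslen
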